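/- arXiv:2305.00311 — 2 statements merged into one kernel-verified Lean document; each statement's English description precedes it below -/
import Mathlib

section
/- For any two matrices A and B of the same dimensions, the nuclear norm satisfies ‖A‖_* − ‖B‖_* ≤ ‖Pr_A[A − B]‖_* − ‖Pr_A^⊥[A − B]‖_*, where Pr_A^⊥(M) = P_{S1⊥(A)} M P_{S2⊥(A)} is the projection onto the complement of the row/column spaces of A and Pr_A(M) = M − Pr_A^⊥(M). -/
open scoped BigOperators

noncomputable def frob {m n : Type*} [Fintype m] [Fintype n] (A : Matrix m n ℝ) : ℝ :=
  Real.sqrt (∑ i, ∑ j, (A i j)^2)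

noncomputable def opNorm {m n : Type*} [Fintype m] [Fintype n] [DecidableEq m] [DecidableEq n]
    (A : Matrix m n ℝ) : ℝ :=
  ‖LinearMap.toContinuousLinearMap (Matrix.toEuclideanLin A)‖

noncomputable def nuclearNorm {m n : Type*} [Fintype m] [Fintype n] [DecidableEq n]
    (A : Matrix m n ℝ) : ℝ :=
  ∑ i, Real.sqrt (((by simpa [Matrix.conjTranspose_eq_transpose_of_trivial] using
    Matrix.isHermitian_conjTranspose_mul_self A : (A.transpose * A).IsHermitian)).eigenvalues i)

noncomputable def colSpace {m n : Type*} [Fintype m] [Fintype n] [DecidableEq n]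
    (A : Matrix m n ℝ) : Submodule ℝ (EuclideanSpace ℝ m) :=
  LinearMap.range (Matrix.toEuclideanLin A)

noncomputable def projMat {m : Type*} [Fintype m] [DecidableEq m]
    (S : Submodule ℝ (EuclideanSpace ℝ m)) : Matrix m m ℝ :=
  Matrix.toEuclideanLin.symm (S.subtype ∘ₗ (S.orthogonalProjectionOnto).toLinearMap)

noncomputable def PrPerp {m n : Type*} [Fintype m] [Fintype n] [DecidableEq m] [DecidableEq n]
    (A B : Matrix m n ℝ) : Matrix m n ℝ :=
  projMat (colSpace A).orthogonal * B * projMat (colSpace A.transpose).orthogonal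

noncomputable def Pr {m n : Type*} [Fintype m] [Fintype n] [DecidableEq m] [DecidableEq n]
    (A B : Matrix m n ℝ) : Matrix m n ℝ :=
  B - PrPerp A B

noncomputable def maxEig {k : Type*} [Fintype k] [DecidableEq k] (M : Matrix k k ℝ) : ℝ :=
  sSup (spectrum ℝ M)
noncomputable def minEig {k : Type*} [Fintype k] [DecidableEq k] (M : Matrix k k ℝ) : ℝ :=
  sInf (spectrum ℝ M)
noncomputable def condNum {k : Type*} [Fintype k] [DecidableEq k] (M : Matrix k k ℝ) : ℝ :=
  maxEig M / minEig M


open scoped RealInnerProductSpace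
open Matrix

set_option maxHeartbeats 1000000

namespace NucAux

variable {m n k : ℕ}

noncomputable abbrev L (M : Matrix (Fin m) (Fin n) ℝ) :
    EuclideanSpace ℝ (Fin n) →ₗ[ℝ] EuclideanSpace ℝ (Fin m) := Matrix.toEuclideanLin M

lemma L_mul (X : Matrix (Fin m) (Fin k) ℝ) (Y : Matrix (Fin k) (Fin n) ℝ) :
    L (X * Y) = (L X).comp (L Y) := by
  ext x
  simp [L, Matrix.toEuclideanLin_apply, Matrix.mulVec_mulVec]

lemma L_transpose_inner (M : Matrix (Fin m) (Fin n) ℝ) (x : EuclideanSpace ℝ (Fin m))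
    (y : EuclideanSpace ℝ (Fin n)) : ⟪L Mᵀ x, y⟫ = ⟪x, L M y⟫ := by
  have h : L Mᵀ = LinearMap.adjoint (L M) := by
    rw [← Matrix.toEuclideanLin_conjTranspose_eq_adjoint,
      Matrix.conjTranspose_eq_transpose_of_trivial]
  rw [h]
  exact LinearMap.adjoint_inner_left (L M) y x

end NucAux

namespace NucAux
variable {m n : ℕ}

noncomputable def ev (M : Matrix (Fin m) (Fin n) ℝ) (j : Fin n) : ℝ :=
  (by simpa [Matrix.conjTranspose_eq_transpose_of_trivial] using Matrix.isHermitian_conjTranspose_mul_self M : (M.transpose * M).IsHermitian).eigenvalues j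

noncomputable def evec (M : Matrix (Fin m) (Fin n) ℝ) :
    OrthonormalBasis (Fin n) ℝ (EuclideanSpace ℝ (Fin n)) :=
  (by simpa [Matrix.conjTranspose_eq_transpose_of_trivial] using Matrix.isHermitian_conjTranspose_mul_self M : (M.transpose * M).IsHermitian).eigenvectorBasis

lemma L_mulself_evec (M : Matrix (Fin m) (Fin n) ℝ) (j : Fin n) :
    L (Mᵀ * M) (evec M j) = ev M j • evec M j := by
  rw [show (Mᵀ : Matrix (Fin n) (Fin m) ℝ) = Mᴴ from
    (Matrix.conjTranspose_eq_transpose_of_trivial M).symm]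
  have h := (by simpa [Matrix.conjTranspose_eq_transpose_of_trivial] using Matrix.isHermitian_conjTranspose_mul_self M : (M.transpose * M).IsHermitian).mulVec_eigenvectorBasis j
  simp only [L, Matrix.toEuclideanLin_apply, ev, evec]
  ext i
  have := congrFun h i
  simpa using this

lemma inner_evec (M : Matrix (Fin m) (Fin n) ℝ) (i j : Fin n) :
    ⟪evec M i, evec M j⟫ = if i = j then 1 else 0 := by
  have := (evec M).orthonormal
  rw [orthonormal_iff_ite] at this
  simpa using this i j

lemma inner_LM_LM (M : Matrix (Fin m) (Fin n) ℝ) (i j : Fin n) :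
    ⟪L M (evec M i), L M (evec M j)⟫ = if i = j then ev M j else 0 := by
  have h1 : ⟪L M (evec M i), L M (evec M j)⟫ = ⟪evec M i, L Mᵀ (L M (evec M j))⟫ :=
    (real_inner_comm _ _).trans
      (((L_transpose_inner M (L M (evec M j)) (evec M i)).symm).trans (real_inner_comm _ _))
  have h2 : L Mᵀ (L M (evec M j)) = ev M j • evec M j := by
    have := L_mulself_evec M j
    rwa [L_mul] at this
  rw [h1, h2, real_inner_smul_right, inner_evec]
  by_cases hij : i = j <;> simp [hij]

lemma ev_nonneg (M : Matrix (Fin m) (Fin n) ℝ) (j : Fin n) : 0 ≤ ev M j := by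
  have h : ⟪L M (evec M j), L M (evec M j)⟫ = ev M j := by simpa using inner_LM_LM M j j
  rw [← h]
  exact real_inner_self_nonneg

lemma norm_LM_evec (M : Matrix (Fin m) (Fin n) ℝ) (j : Fin n) :
    ‖L M (evec M j)‖ = Real.sqrt (ev M j) := by
  have h : ‖L M (evec M j)‖ ^ 2 = ev M j := by
    rw [← real_inner_self_eq_norm_sq]
    simpa using inner_LM_LM M j j
  rw [← h, Real.sqrt_sq (norm_nonneg _)]

lemma LM_evec_eq_zero (M : Matrix (Fin m) (Fin n) ℝ) {j : Fin n} (h : ev M j = 0) :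
    L M (evec M j) = 0 := by
  have := norm_LM_evec M j
  rw [h, Real.sqrt_zero, norm_eq_zero] at this
  exact this

end NucAux

namespace NucAux
variable {m n : ℕ}

noncomputable def phi (M : Matrix (Fin m) (Fin n) ℝ) :
    EuclideanSpace ℝ (Fin n) →ₗ[ℝ] EuclideanSpace ℝ (Fin m) where
  toFun x := ∑ j, ((Real.sqrt (ev M j))⁻¹ * ⟪evec M j, x⟫) • L M (evec M j)
  map_add' x y := by
    simp only [inner_add_right, mul_add, add_smul]
    rw [Finset.sum_add_distrib]
  map_smul' c x := by
    simp only [inner_smul_right, RingHom.id_apply, Finset.smul_sum, smul_smul]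
    congr 1; ext j; ring_nf

lemma phi_apply (M : Matrix (Fin m) (Fin n) ℝ) (x : EuclideanSpace ℝ (Fin n)) :
    phi M x = ∑ j, ((Real.sqrt (ev M j))⁻¹ * ⟪evec M j, x⟫) • L M (evec M j) := rfl

lemma phi_mem_range (M : Matrix (Fin m) (Fin n) ℝ) (x : EuclideanSpace ℝ (Fin n)) :
    phi M x ∈ LinearMap.range (L M) := by
  rw [phi_apply]
  exact Submodule.sum_mem _ fun j _ => Submodule.smul_mem _ _ ⟨_, rfl⟩

lemma phi_evec (M : Matrix (Fin m) (Fin n) ℝ) (k : Fin n) :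
    phi M (evec M k) = (Real.sqrt (ev M k))⁻¹ • L M (evec M k) := by
  rw [phi_apply, Finset.sum_eq_single k]
  · rw [inner_evec, if_pos rfl, mul_one]
  · intro j _ hj
    rw [inner_evec, if_neg hj]
    simp
  · simp

lemma inner_phi_L_evec (M : Matrix (Fin m) (Fin n) ℝ) (k : Fin n) :
    ⟪phi M (evec M k), L M (evec M k)⟫ = Real.sqrt (ev M k) := by
  rw [phi_evec, real_inner_smul_left]
  have h : ⟪L M (evec M k), L M (evec M k)⟫ = ev M k := by simpa using inner_LM_LM M k k
  rw [h]
  rcases eq_or_lt_of_le (ev_nonneg M k) with h0 | h0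
  · rw [← h0]; simp
  · have hs : Real.sqrt (ev M k) ≠ 0 := (Real.sqrt_pos.mpr h0).ne'
    rw [inv_mul_eq_div, div_eq_iff hs, Real.mul_self_sqrt h0.le]

lemma phi_norm_sq (M : Matrix (Fin m) (Fin n) ℝ) (x : EuclideanSpace ℝ (Fin n)) :
    ⟪phi M x, phi M x⟫ = ∑ j, if 0 < ev M j then ⟪evec M j, x⟫ ^ 2 else 0 := by
  rw [phi_apply, sum_inner]
  refine Finset.sum_congr rfl fun j _ => ?_
  rw [inner_sum]
  rw [Finset.sum_eq_single j]
  · rw [real_inner_smul_left, real_inner_smul_right]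
    have h : ⟪L M (evec M j), L M (evec M j)⟫ = ev M j := by simpa using inner_LM_LM M j j
    rw [h]
    rcases eq_or_lt_of_le (ev_nonneg M j) with h0 | h0
    · rw [← h0]; simp
    · rw [if_pos h0]
      have he : ev M j = Real.sqrt (ev M j) * Real.sqrt (ev M j) :=
        (Real.mul_self_sqrt h0.le).symm
      have hs : Real.sqrt (ev M j) ≠ 0 := (Real.sqrt_pos.mpr h0).ne'
      generalize Real.sqrt (ev M j) = s at he hs ⊢
      rw [he]
      have hinv : s⁻¹ * s = 1 := inv_mul_cancel₀ hs
      linear_combination ⟪evec M j, x⟫ ^ 2 * (s⁻¹ * s + 1) * hinv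
  · intro i _ hij
    rw [real_inner_smul_left, real_inner_smul_right]
    have : ⟪L M (evec M j), L M (evec M i)⟫ = 0 := by
      rw [inner_LM_LM, if_neg (by exact fun hc => hij hc.symm)]
    rw [this]; ring
  · simp

lemma evec_mem_range (M : Matrix (Fin m) (Fin n) ℝ) {j : Fin n} (h : 0 < ev M j) :
    evec M j ∈ LinearMap.range (L Mᵀ) := by
  have h1 : L Mᵀ (L M (evec M j)) = ev M j • evec M j := by
    have := L_mulself_evec M j
    rwa [L_mul] at this
  exact ⟨(ev M j)⁻¹ • L M (evec M j), by
    rw [_root_.map_smul, h1, smul_smul, inv_mul_cancel₀ h.ne', one_smul]⟩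

end NucAux

namespace NucAux
variable {m n : ℕ}

noncomputable def ip (f g : EuclideanSpace ℝ (Fin n) →ₗ[ℝ] EuclideanSpace ℝ (Fin m)) : ℝ :=
  ∑ j, ⟪f (EuclideanSpace.basisFun (Fin n) ℝ j), g (EuclideanSpace.basisFun (Fin n) ℝ j)⟫

lemma sum_inner_basis_indep (f g : EuclideanSpace ℝ (Fin n) →ₗ[ℝ] EuclideanSpace ℝ (Fin m))
    (b c : OrthonormalBasis (Fin n) ℝ (EuclideanSpace ℝ (Fin n))) :
    ∑ j, ⟪f (b j), g (b j)⟫ = ∑ j, ⟪f (c j), g (c j)⟫ := by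
  have hexp : ∀ (h : EuclideanSpace ℝ (Fin n) →ₗ[ℝ] EuclideanSpace ℝ (Fin m)) (j : Fin n),
      h (b j) = ∑ k, ⟪c k, b j⟫ • h (c k) := by
    intro h j
    conv_lhs => rw [← c.sum_repr' (b j)]
    rw [map_sum]
    refine Finset.sum_congr rfl fun k _ => ?_
    rw [_root_.map_smul]
  calc ∑ j, ⟪f (b j), g (b j)⟫
      = ∑ j, ∑ k, ∑ l, (⟪c k, b j⟫ * ⟪c l, b j⟫) * ⟪f (c k), g (c l)⟫ := by
        refine Finset.sum_congr rfl fun j _ => ?_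
        rw [hexp f j, hexp g j, sum_inner]
        refine Finset.sum_congr rfl fun k _ => ?_
        rw [inner_sum]
        refine Finset.sum_congr rfl fun l _ => ?_
        rw [real_inner_smul_left, real_inner_smul_right]
        ring
    _ = ∑ k, ∑ l, (∑ j, ⟪c k, b j⟫ * ⟪c l, b j⟫) * ⟪f (c k), g (c l)⟫ := by
        rw [Finset.sum_comm]
        refine Finset.sum_congr rfl fun k _ => ?_
        rw [Finset.sum_comm]
        refine Finset.sum_congr rfl fun l _ => ?_
        rw [Finset.sum_mul]
    _ = ∑ k, ⟪f (c k), g (c k)⟫ := by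
        refine Finset.sum_congr rfl fun k _ => ?_
        have hp : ∀ l, (∑ j, ⟪c k, b j⟫ * ⟪c l, b j⟫) = if k = l then (1:ℝ) else 0 := by
          intro l
          have : ∑ j, ⟪c k, b j⟫ * ⟪b j, c l⟫ = ⟪c k, c l⟫ := b.sum_inner_mul_inner (c k) (c l)
          calc (∑ j, ⟪c k, b j⟫ * ⟪c l, b j⟫)
              = ∑ j, ⟪c k, b j⟫ * ⟪b j, c l⟫ := by
                refine Finset.sum_congr rfl fun j _ => ?_
                rw [real_inner_comm (c l) (b j)]
            _ = ⟪c k, c l⟫ := this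
            _ = if k = l then (1:ℝ) else 0 := by
                have := c.orthonormal
                rw [orthonormal_iff_ite] at this
                simpa using this k l
        rw [Finset.sum_eq_single k]
        · rw [hp k, if_pos rfl, one_mul]
        · intro l _ hlk
          rw [hp l, if_neg (fun hc => hlk hc.symm), zero_mul]
        · simp
  
lemma ip_eq_basis (f g : EuclideanSpace ℝ (Fin n) →ₗ[ℝ] EuclideanSpace ℝ (Fin m))
    (b : OrthonormalBasis (Fin n) ℝ (EuclideanSpace ℝ (Fin n))) :
    ip f g = ∑ j, ⟪f (b j), g (b j)⟫ :=
  sum_inner_basis_indep f g (EuclideanSpace.basisFun (Fin n) ℝ) b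

lemma ip_sub_right (f g h : EuclideanSpace ℝ (Fin n) →ₗ[ℝ] EuclideanSpace ℝ (Fin m)) :
    ip f (g - h) = ip f g - ip f h := by
  unfold ip
  rw [← Finset.sum_sub_distrib]
  refine Finset.sum_congr rfl fun j _ => ?_
  simp [inner_sub_right]

lemma ip_sub_left (f g h : EuclideanSpace ℝ (Fin n) →ₗ[ℝ] EuclideanSpace ℝ (Fin m)) :
    ip (f - g) h = ip f h - ip g h := by
  unfold ip
  rw [← Finset.sum_sub_distrib]
  refine Finset.sum_congr rfl fun j _ => ?_
  simp [inner_sub_left]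

end NucAux
namespace NucAux
variable {m n : ℕ}

lemma nuclearNorm_eq (M : Matrix (Fin m) (Fin n) ℝ) :
    nuclearNorm M = ∑ j, Real.sqrt (ev M j) := rfl

lemma L_projMat (U : Submodule ℝ (EuclideanSpace ℝ (Fin m))) :
    Matrix.toEuclideanLin (projMat U) = U.subtype ∘ₗ (U.orthogonalProjectionOnto).toLinearMap :=
  Matrix.toEuclideanLin.apply_symm_apply _

lemma L_projMat_mem (U : Submodule ℝ (EuclideanSpace ℝ (Fin m))) (x : EuclideanSpace ℝ (Fin m)) :
    L (projMat U) x ∈ U := by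
  have h := LinearMap.congr_fun (L_projMat U) x
  simp only [L]
  rw [h]
  exact (U.orthogonalProjectionOnto x).2

lemma projMat_transpose (U : Submodule ℝ (EuclideanSpace ℝ (Fin m))) :
    (projMat U)ᵀ = projMat U := by
  apply Matrix.toEuclideanLin.injective
  apply LinearMap.ext
  intro x
  apply ext_inner_right ℝ
  intro y
  have h1 : ⟪L (projMat U)ᵀ x, y⟫ = ⟪x, L (projMat U) y⟫ := L_transpose_inner _ x y
  have h2 : ⟪x, L (projMat U) y⟫ = ⟪L (projMat U) x, y⟫ := by
    have hx := LinearMap.congr_fun (L_projMat U) x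
    have hy := LinearMap.congr_fun (L_projMat U) y
    simp only [L] at *
    rw [hx, hy]
    exact (Submodule.inner_starProjection_left_eq_right U x y).symm
  exact h1.trans h2

lemma range_PrPerp_le (A Δ : Matrix (Fin m) (Fin n) ℝ) (x : EuclideanSpace ℝ (Fin n)) :
    L (PrPerp A Δ) x ∈ (colSpace A)ᗮ := by
  have h : PrPerp A Δ = projMat (colSpace A)ᗮ * (Δ * projMat (colSpace Aᵀ)ᗮ) := by
    unfold PrPerp; rw [Matrix.mul_assoc]
  rw [h, L_mul]
  exact L_projMat_mem _ _

lemma range_PrPerp_transpose_le (A Δ : Matrix (Fin m) (Fin n) ℝ) (x : EuclideanSpace ℝ (Fin m)) :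
    L (PrPerp A Δ)ᵀ x ∈ (colSpace Aᵀ)ᗮ := by
  have h : (PrPerp A Δ)ᵀ = projMat (colSpace Aᵀ)ᗮ * (Δᵀ * projMat (colSpace A)ᗮ) := by
    unfold PrPerp
    rw [Matrix.transpose_mul, Matrix.transpose_mul, projMat_transpose, projMat_transpose]
  rw [h, L_mul]
  exact L_projMat_mem _ _

end NucAux

namespace NucAux
variable {m n : ℕ}

lemma ip_L_le_nuclear (f : EuclideanSpace ℝ (Fin n) →ₗ[ℝ] EuclideanSpace ℝ (Fin m))
    (hf : ∀ x, ‖f x‖ ≤ ‖x‖) (M : Matrix (Fin m) (Fin n) ℝ) :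
    ip f (L M) ≤ nuclearNorm M := by
  rw [nuclearNorm_eq, ip_eq_basis f (L M) (evec M)]
  refine Finset.sum_le_sum fun j _ => ?_
  calc ⟪f (evec M j), L M (evec M j)⟫
      ≤ ‖f (evec M j)‖ * ‖L M (evec M j)‖ := real_inner_le_norm _ _
    _ ≤ 1 * ‖L M (evec M j)‖ := by
        apply mul_le_mul_of_nonneg_right _ (norm_nonneg _)
        calc ‖f (evec M j)‖ ≤ ‖evec M j‖ := hf _
          _ = 1 := (evec M).orthonormal.1 j
    _ = Real.sqrt (ev M j) := by rw [one_mul, norm_LM_evec]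

lemma ip_phi_L (M : Matrix (Fin m) (Fin n) ℝ) : ip (phi M) (L M) = nuclearNorm M := by
  rw [nuclearNorm_eq, ip_eq_basis (phi M) (L M) (evec M)]
  exact Finset.sum_congr rfl fun j _ => inner_phi_L_evec M j

lemma ip_eq_zero_of_orth (f g : EuclideanSpace ℝ (Fin n) →ₗ[ℝ] EuclideanSpace ℝ (Fin m))
    (U : Submodule ℝ (EuclideanSpace ℝ (Fin m)))
    (hf : ∀ x, f x ∈ U) (hg : ∀ x, g x ∈ Uᗮ) : ip f g = 0 := by
  unfold ip
  refine Finset.sum_eq_zero fun j _ => ?_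
  exact Submodule.inner_right_of_mem_orthogonal (hf _) (hg _)

lemma bessel_two (S : Submodule ℝ (EuclideanSpace ℝ (Fin n)))
    (v w : OrthonormalBasis (Fin n) ℝ (EuclideanSpace ℝ (Fin n))) (μ ν : Fin n → ℝ)
    (hv : ∀ j, 0 < μ j → v j ∈ S) (hw : ∀ k, 0 < ν k → w k ∈ Sᗮ)
    (x : EuclideanSpace ℝ (Fin n)) :
    (∑ j, if 0 < μ j then ⟪v j, x⟫ ^ 2 else 0) +
      (∑ k, if 0 < ν k then ⟪w k, x⟫ ^ 2 else 0) ≤ ‖x‖ ^ 2 := by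
  classical
  set ι := {j : Fin n // 0 < μ j} ⊕ {k : Fin n // 0 < ν k} with hι
  set F : ι → EuclideanSpace ℝ (Fin n) := Sum.elim (fun j => v j.1) (fun k => w k.1) with hF
  have hon : Orthonormal ℝ F := by
    constructor
    · rintro (⟨j, hj⟩ | ⟨k, hk⟩)
      · exact v.orthonormal.1 j
      · exact w.orthonormal.1 k
    · rintro (⟨j, hj⟩ | ⟨k, hk⟩) (⟨j', hj'⟩ | ⟨k', hk'⟩) hne
      · have : j ≠ j' := fun hc => hne (by simp [hc])
        exact v.orthonormal.2 this
      · exact Submodule.inner_right_of_mem_orthogonal (hv j hj) (hw k' hk')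
      · rw [real_inner_comm]
        exact Submodule.inner_right_of_mem_orthogonal (hv j' hj') (hw k hk)
      · have : k ≠ k' := fun hc => hne (by simp [hc])
        exact w.orthonormal.2 this
  have hb := hon.sum_inner_products_le (s := Finset.univ) x
  have hsum : ∑ i : ι, ‖⟪F i, x⟫‖ ^ 2
      = (∑ j, if 0 < μ j then ⟪v j, x⟫ ^ 2 else 0) +
        (∑ k, if 0 < ν k then ⟪w k, x⟫ ^ 2 else 0) := by
    rw [Fintype.sum_sum_type]
    congr 1
    · have hc : ∀ j : {j : Fin n // 0 < μ j}, ‖⟪F (Sum.inl j), x⟫‖ ^ 2 = ⟪v j.1, x⟫ ^ 2 := by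
        intro j; rw [hF]; simp [Real.norm_eq_abs, sq_abs]
      rw [Finset.sum_congr rfl fun j _ => hc j, ← Finset.sum_filter]
      exact (Finset.sum_subtype _ (fun j => by simp) fun j => ⟪v j, x⟫ ^ 2).symm
    · have hc : ∀ k : {k : Fin n // 0 < ν k}, ‖⟪F (Sum.inr k), x⟫‖ ^ 2 = ⟪w k.1, x⟫ ^ 2 := by
        intro k; rw [hF]; simp [Real.norm_eq_abs, sq_abs]
      rw [Finset.sum_congr rfl fun k _ => hc k, ← Finset.sum_filter]
      exact (Finset.sum_subtype _ (fun k => by simp) fun k => ⟪w k, x⟫ ^ 2).symm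
  rw [← hsum]
  exact hb

end NucAux

namespace NucAux
variable {m n : ℕ}

lemma phi_PrPerp_mem (A Δ : Matrix (Fin m) (Fin n) ℝ) (x : EuclideanSpace ℝ (Fin n)) :
    phi (PrPerp A Δ) x ∈ (colSpace A)ᗮ := by
  obtain ⟨y, hy⟩ := phi_mem_range (PrPerp A Δ) x
  rw [← hy]
  exact range_PrPerp_le A Δ y

lemma Z_contr (A B : Matrix (Fin m) (Fin n) ℝ) (x : EuclideanSpace ℝ (Fin n)) :
    ‖(phi A - phi (PrPerp A (A - B))) x‖ ≤ ‖x‖ := by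
  set Δ' := PrPerp A (A - B) with hD
  have hcross : ⟪phi A x, phi Δ' x⟫ = 0 :=
    Submodule.inner_right_of_mem_orthogonal (phi_mem_range A x) (phi_PrPerp_mem A (A - B) x)
  have hbound := bessel_two (colSpace Aᵀ) (evec A) (evec Δ') (ev A) (ev Δ')
    (fun j hj => evec_mem_range A hj)
    (fun k hk => by
      obtain ⟨y, hy⟩ := evec_mem_range Δ' hk
      rw [← hy]
      exact range_PrPerp_transpose_le A (A - B) y) x
  have hsq : ‖(phi A - phi Δ') x‖ ^ 2 ≤ ‖x‖ ^ 2 := by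
    rw [← real_inner_self_eq_norm_sq]
    have happ : (phi A - phi Δ') x = phi A x - phi Δ' x := rfl
    rw [happ, real_inner_sub_sub_self, hcross]
    have h1 := phi_norm_sq A x
    have h2 := phi_norm_sq Δ' x
    linarith
  calc ‖(phi A - phi Δ') x‖ = Real.sqrt (‖(phi A - phi Δ') x‖ ^ 2) :=
        (Real.sqrt_sq (norm_nonneg _)).symm
    _ ≤ Real.sqrt (‖x‖ ^ 2) := Real.sqrt_le_sqrt hsq
    _ = ‖x‖ := Real.sqrt_sq (norm_nonneg _)

end NucAux


open NucAux

/-- Nuclear-norm triangle-type inequality: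
‖A‖_* − ‖B‖_* ≤ ‖Pr_A[A − B]‖_* − ‖Pr_A^⊥[A − B]‖_*. -/
theorem nuclear_norm_projection_inequality {m n : ℕ}
    (A B : Matrix (Fin m) (Fin n) ℝ) :
    nuclearNorm A - nuclearNorm B ≤
      nuclearNorm (Pr A (A - B)) - nuclearNorm (PrPerp A (A - B)) := by
  set Δ : Matrix (Fin m) (Fin n) ℝ := A - B with hΔ
  set Δ' : Matrix (Fin m) (Fin n) ℝ := PrPerp A Δ with hΔ'
  set Z := phi A - phi Δ' with hZdef
  have hcontr : ∀ x, ‖Z x‖ ≤ ‖x‖ := fun x => Z_contr A B x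
  have h1 : ip Z (L B) ≤ nuclearNorm B := ip_L_le_nuclear Z hcontr B
  have h4 : ip Z (L (Pr A Δ)) ≤ nuclearNorm (Pr A Δ) := ip_L_le_nuclear Z hcontr _
  have key2 : ip Z (L A) = nuclearNorm A := by
    rw [hZdef, ip_sub_left, ip_phi_L]
    have h0 : ip (phi Δ') (L A) = 0 := by
      apply ip_eq_zero_of_orth _ _ ((colSpace A)ᗮ)
      · intro x; exact phi_PrPerp_mem A Δ x
      · intro x
        exact Submodule.le_orthogonal_orthogonal _ ⟨x, rfl⟩
    rw [h0, sub_zero]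
  have key3 : ip Z (L Δ') = - nuclearNorm Δ' := by
    rw [hZdef, ip_sub_left, ip_phi_L]
    have h0 : ip (phi A) (L Δ') = 0 := by
      apply ip_eq_zero_of_orth _ _ (colSpace A)
      · intro x; exact phi_mem_range A x
      · intro x; exact range_PrPerp_le A Δ x
    rw [h0]; ring
  have hsplit : L B = L A - L (Pr A Δ) - L Δ' := by
    have hB : B = A - Pr A Δ - Δ' := by
      have hPr : Pr A Δ = Δ - Δ' := rfl
      rw [hPr, hΔ]; abel
    unfold L
    rw [hB, map_sub, map_sub]
  have hipB : ip Z (L B) = nuclearNorm A - ip Z (L (Pr A Δ)) + nuclearNorm Δ' := by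
    rw [hsplit, ip_sub_right, ip_sub_right, key2, key3]; ring
  rw [hipB] at h1
  linarith
end

section
/- Let A be a complex n × n matrix with spectral radius ρ(A) < 1. Then |det(I + A)| ≥ exp( Re(tr A) − (‖A‖_2² / 2) / (1 − ρ(A)) ), where ‖A‖_2 denotes the Frobenius norm. -/
open scoped BigOperators

/-- Frobenius norm of a complex matrix. -/
noncomputable def frobC {n : Type*} [Fintype n] (A : Matrix n n ℂ) : ℝ :=
  Real.sqrt (∑ i, ∑ j, ‖A i j‖ ^ 2)

/-- Spectral radius: maximum modulus of the eigenvalues of A. -/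
noncomputable def specRad {n : ℕ} (A : Matrix (Fin n) (Fin n) ℂ) : ℝ :=
  sSup ((fun z : ℂ => ‖z‖) '' spectrum ℂ A)

namespace SchurAux

open Real Submodule Module Polynomial Matrix

noncomputable section


/-- derivative helper: F(x) = log(1+x) - x + x^2/(2*(1-r)) -/
lemma hasDerivAt_F (r : ℝ) (x : ℝ) (hx : (-1:ℝ) < x) :
    HasDerivAt (fun x : ℝ => Real.log (1+x) - x + x^2/(2*(1-r)))
      (1/(1+x) - 1 + x/(1-r)) x := by
  have h1 : HasDerivAt (fun x : ℝ => Real.log (1+x)) (1/(1+x)) x := by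
    have := (Real.hasDerivAt_log (by linarith : (1:ℝ)+x ≠ 0)).comp x
      ((hasDerivAt_id x).const_add 1)
    exact this.congr_deriv (by simp [one_div])
  have h2 : HasDerivAt (fun x : ℝ => x^2/(2*(1-r))) (x/(1-r)) x := by
    have := (hasDerivAt_pow 2 x).div_const (2*(1-r))
    refine this.congr_deriv ?_
    rcases eq_or_ne (1-r) 0 with h|h
    · simp [h]
    · field_simp
      ring
  exact (h1.sub (hasDerivAt_id x)).add h2

lemma key_real {r x : ℝ} (h1 : |x| ≤ r) (h2 : r < 1) :
    Real.exp (x - x^2/(2*(1-r))) ≤ 1 + x := by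
  have hr0 : 0 ≤ r := le_trans (abs_nonneg x) h1
  have hxlt : -1 < x := by cases abs_le.1 h1; linarith
  have hx1 : (0:ℝ) < 1 + x := by linarith
  set F : ℝ → ℝ := fun x : ℝ => Real.log (1+x) - x + x^2/(2*(1-r)) with hF
  have hd : ∀ y ∈ Set.Ioi (-1:ℝ), HasDerivAt F (1/(1+y) - 1 + y/(1-r)) y :=
    fun y hy => hasDerivAt_F r y hy
  have hF0 : F 0 = 0 := by simp [hF]
  -- F x ≥ 0
  have key : 0 ≤ F x := by
    rcases le_or_gt 0 x with hx0 | hx0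
    · -- monotone on [0, r]
      have hmono : MonotoneOn F (Set.Icc 0 r) := by
        apply monotoneOn_of_deriv_nonneg (convex_Icc 0 r)
        · intro y hy
          exact (hd y (by simp at hy ⊢; linarith [hy.1])).continuousAt.continuousWithinAt
        · intro y hy
          rw [interior_Icc] at hy
          exact (hd y (by simp at hy ⊢; linarith [hy.1])).differentiableAt.differentiableWithinAt
        · intro y hy
          rw [interior_Icc] at hy
          obtain ⟨hy1, hy2⟩ := hy
          rw [(hd y (by simp; linarith)).deriv]
          have h1y : (0:ℝ) < 1 + y := by linarith
          have h1r : (0:ℝ) < 1 - r := by linarith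
          have he : 1/(1+y) - 1 + y/(1-r) = y*(y+r)/((1+y)*(1-r)) := by
            field_simp
            ring
          rw [he]
          apply div_nonneg (by nlinarith) (by nlinarith)
      have := hmono (Set.mem_Icc.2 ⟨le_refl 0, hr0⟩) (Set.mem_Icc.2 ⟨hx0, (abs_le.1 h1).2⟩) hx0
      rwa [hF0] at this
    · have hanti : AntitoneOn F (Set.Icc (-r) 0) := by
        apply antitoneOn_of_deriv_nonpos (convex_Icc (-r) 0)
        · intro y hy
          exact (hd y (by simp at hy ⊢; linarith [hy.1])).continuousAt.continuousWithinAt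
        · intro y hy
          rw [interior_Icc] at hy
          exact (hd y (by simp at hy ⊢; linarith [hy.1])).differentiableAt.differentiableWithinAt
        · intro y hy
          rw [interior_Icc] at hy
          obtain ⟨hy1, hy2⟩ := hy
          rw [(hd y (by simp; linarith)).deriv]
          have h1y : (0:ℝ) < 1 + y := by linarith
          have h1r : (0:ℝ) < 1 - r := by linarith
          have he : 1/(1+y) - 1 + y/(1-r) = y*(y+r)/((1+y)*(1-r)) := by
            field_simp
            ring
          rw [he]
          apply div_nonpos_of_nonpos_of_nonneg (by nlinarith) (by nlinarith)
      have := hanti (Set.mem_Icc.2 ⟨(abs_le.1 h1).1, le_of_lt hx0⟩)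
        (Set.mem_Icc.2 ⟨by linarith, le_refl 0⟩) (le_of_lt hx0)
      rwa [hF0] at this
  -- conclude
  have : x - x^2/(2*(1-r)) ≤ Real.log (1+x) := by
    have := key
    simp only [hF] at this
    linarith
  calc Real.exp (x - x^2/(2*(1-r))) ≤ Real.exp (Real.log (1+x)) := Real.exp_le_exp.2 this
    _ = 1 + x := Real.exp_log hx1

lemma key_complex {r : ℝ} (z : ℂ) (h1 : ‖z‖ ≤ r) (h2 : r < 1) :
    Real.exp (z.re - ‖z‖^2/(2*(1-r))) ≤ ‖1+z‖ := by
  have hre : |z.re| ≤ r := le_trans (Complex.abs_re_le_norm z) h1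
  have h1r : (0:ℝ) < 1 - r := by linarith
  have hsq : z.re^2 ≤ ‖z‖^2 := by
    have h := Complex.abs_re_le_norm z
    nlinarith [abs_nonneg z.re, norm_nonneg z, sq_abs z.re]
  have step1 : Real.exp (z.re - ‖z‖^2/(2*(1-r)))
      ≤ Real.exp (z.re - z.re^2/(2*(1-r))) := by
    apply Real.exp_le_exp.2
    have : z.re^2/(2*(1-r)) ≤ ‖z‖^2/(2*(1-r)) :=
      div_le_div_of_nonneg_right hsq (by linarith)
    linarith
  have step2 : Real.exp (z.re - z.re^2/(2*(1-r))) ≤ 1 + z.re := key_real hre h2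
  have step3 : 1 + z.re ≤ ‖1+z‖ := by
    have := Complex.re_le_norm (1+z)
    simpa using this
  linarith

lemma exists_triangular_onb : ∀ (n : ℕ) (E : Type) [NormedAddCommGroup E]
    [InnerProductSpace ℂ E] [FiniteDimensional ℂ E] (hn : Module.finrank ℂ E = n)
    (f : E →ₗ[ℂ] E),
    ∃ b : OrthonormalBasis (Fin n) ℂ E,
      ∀ j, f (b j) ∈ Submodule.span ℂ (b '' Set.Iic j) := by
  intro n
  induction n with
  | zero =>
    intro E _ _ _ hn f
    have hsub : Subsingleton E := by
      have := Module.finrank_zero_iff (R := ℂ) (M := E)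
      exact this.1 hn
    have hon : Orthonormal ℂ (Fin.elim0 : Fin 0 → E) := by
      constructor
      · exact fun i => i.elim0
      · exact fun i => i.elim0
    have hsp : ⊤ ≤ Submodule.span ℂ (Set.range (Fin.elim0 : Fin 0 → E)) := by
      intro x _
      have : x = 0 := Subsingleton.elim x 0
      simp [this]
    exact ⟨OrthonormalBasis.mk hon hsp, fun j => j.elim0⟩
  | succ n IH =>
    intro E _ _ _ hn f
    have hnt : Nontrivial E := by
      have := Module.finrank_pos_iff (R := ℂ) (M := E)
      exact this.1 (by omega)
    obtain ⟨μ, hμ⟩ := Module.End.exists_eigenvalue (f : Module.End ℂ E)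
    obtain ⟨v, hv⟩ := hμ.exists_hasEigenvector
    have hvne : v ≠ 0 := hv.right
    set u : E := ((‖v‖ : ℂ))⁻¹ • v with hu
    have hun : ‖u‖ = 1 := by
      rw [hu, norm_smul, norm_inv, Complex.norm_real, norm_norm,
        inv_mul_cancel₀ (norm_ne_zero_iff.2 hvne)]
    have hfu : f u = μ • u := by
      rw [hu, _root_.map_smul, hv.apply_eq_smul, smul_comm]
    set W : Submodule ℂ E := (ℂ ∙ u)ᗮ with hW
    have hune : u ≠ 0 := by
      intro h; rw [h, norm_zero] at hun; exact one_ne_zero hun.symm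
    have hWrank : Module.finrank ℂ W = n := by
      have h1 : Module.finrank ℂ (ℂ ∙ u) = 1 := finrank_span_singleton hune
      have h2 := Submodule.finrank_add_finrank_orthogonal (K := (ℂ ∙ u)) (E := E)
      rw [h1, hn] at h2
      rw [hW]
      omega
    set g : W →ₗ[ℂ] W :=
      (orthogonalProjection W).toLinearMap.comp (f.comp W.subtype) with hg
    obtain ⟨c, hc⟩ := IH W hWrank g
    set b : Fin (n+1) → E := Fin.cons u (fun j => (c j : E)) with hb
    have huc : ∀ j : Fin n, (inner ℂ u ((c j : E)) : ℂ) = 0 := by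
      intro j
      have h : ((c j : E)) ∈ (ℂ ∙ u)ᗮ := (c j).2
      exact (Submodule.mem_orthogonal _ _).1 h u (Submodule.mem_span_singleton_self u)
    have hbon : Orthonormal ℂ b := by
      rw [orthonormal_iff_ite]
      intro i j
      refine Fin.cases ?_ ?_ i <;> [skip; intro i'] <;> refine Fin.cases ?_ ?_ j
      · simp only [hb, Fin.cons_zero, if_pos rfl]
        rw [@inner_self_eq_norm_sq_to_K ℂ, hun]
        norm_num
      · intro j'
        simp only [hb, Fin.cons_zero, Fin.cons_succ, if_neg (Fin.succ_ne_zero j').symm]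
        exact huc j'
      · simp only [hb, Fin.cons_zero, Fin.cons_succ, if_neg (Fin.succ_ne_zero i')]
        rw [← inner_conj_symm, huc i', map_zero]
      · intro j'
        have := orthonormal_iff_ite.1 c.orthonormal i' j'
        simpa [hb, Submodule.coe_inner, Fin.succ_inj] using this
    have hbbasis : ⊤ ≤ Submodule.span ℂ (Set.range b) :=
      (hbon.linearIndependent.span_eq_top_of_card_eq_finrank (by simp [hn])).ge
    refine ⟨OrthonormalBasis.mk hbon hbbasis, ?_⟩
    simp only [OrthonormalBasis.coe_mk]
    intro j
    refine Fin.cases ?_ ?_ j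
    · have h0 : b 0 = u := by simp [hb]
      rw [h0, hfu]
      exact Submodule.smul_mem _ _ (Submodule.subset_span ⟨0, Set.mem_Iic.2 le_rfl, h0⟩)
    · intro j'
      have hbsucc : b j'.succ = (c j' : E) := by simp [hb]
      rw [hbsucc]
      have hdecomp : f (c j' : E) =
          (orthogonalProjection (ℂ ∙ u) (f (c j' : E)) : E) +
          (orthogonalProjection W (f (c j' : E)) : E) := by
        exact (Submodule.starProjection_add_starProjection_orthogonal (K := ℂ ∙ u)
          (f (c j' : E))).symm
      rw [hdecomp]
      apply Submodule.add_mem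
      · have h1 : ((orthogonalProjection (ℂ ∙ u) (f (c j' : E))) : E) ∈ (ℂ ∙ u) :=
          (orthogonalProjection (ℂ ∙ u) (f (c j' : E))).2
        obtain ⟨a, ha⟩ := Submodule.mem_span_singleton.1 h1
        rw [← ha]
        apply Submodule.smul_mem
        have h0 : b 0 = u := by simp [hb]
        exact Submodule.subset_span ⟨0, Set.mem_Iic.2 (Fin.zero_le _), h0⟩
      · have hgc : ((orthogonalProjection W (f (c j' : E))) : E) = ((g (c j') : W) : E) := by
          simp [hg]
        rw [hgc]
        have hmap : ((g (c j') : W) : E) ∈ Submodule.map W.subtype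
            (Submodule.span ℂ ((c : Fin n → W) '' Set.Iic j')) :=
          ⟨g (c j'), hc j', rfl⟩
        rw [Submodule.map_span] at hmap
        refine Submodule.span_mono ?_ hmap
        rintro x ⟨y, ⟨i, hi, rfl⟩, rfl⟩
        exact ⟨i.succ, Fin.succ_le_succ_iff.2 hi, by simp [hb]⟩

lemma mem_spectrum_iff_isRoot {n : ℕ} (A : Matrix (Fin n) (Fin n) ℂ) (μ : ℂ) :
    μ ∈ spectrum ℂ A ↔ A.charpoly.IsRoot μ := by
  rw [spectrum.mem_iff, Matrix.isUnit_iff_isUnit_det, isUnit_iff_ne_zero, not_not]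
  have hdet : ((algebraMap ℂ (Matrix (Fin n) (Fin n) ℂ)) μ - A).det
      = A.charpoly.eval μ := by
    rw [Matrix.charpoly, ← Polynomial.coe_evalRingHom, RingHom.map_det]
    congr 1
    ext i j
    by_cases h : i = j
    · subst h
      simp [charmatrix_apply_eq, Matrix.algebraMap_matrix_apply]
    · simp [charmatrix_apply_ne _ _ _ h, Matrix.algebraMap_matrix_apply, h]
  rw [hdet, Polynomial.IsRoot]

-- Parseval helper
lemma parseval_onb {m : ℕ} {E : Type} [NormedAddCommGroup E] [InnerProductSpace ℂ E]
    (c : OrthonormalBasis (Fin m) ℂ E) (x : E) :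
    ∑ i, ‖(inner ℂ (c i) x : ℂ)‖^2 = ‖x‖^2 := by
  have h1 : ‖c.repr x‖ = ‖x‖ := c.repr.norm_map x
  have h2 : ‖c.repr x‖^2 = ∑ i, ‖c.repr x i‖^2 := by
    rw [EuclideanSpace.norm_eq]
    rw [Real.sq_sqrt (Finset.sum_nonneg fun i _ => sq_nonneg _)]
  rw [← h1, h2]
  congr 1
  ext i
  rw [c.repr_apply_apply]

-- frobenius sum invariance under change to another orthonormal basis
lemma frob_sum_invariant {m : ℕ} {E : Type} [NormedAddCommGroup E] [InnerProductSpace ℂ E]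
    [FiniteDimensional ℂ E]
    (b c : OrthonormalBasis (Fin m) ℂ E) (f : E →ₗ[ℂ] E) :
    ∑ j, ‖f (b j)‖^2 = ∑ j, ‖f (c j)‖^2 := by
  have key : ∀ d : OrthonormalBasis (Fin m) ℂ E,
      ∑ j, ‖f (d j)‖^2 = ∑ i, ‖(LinearMap.adjoint f) (c i)‖^2 := by
    intro d
    have h1 : ∀ j, ‖f (d j)‖^2 = ∑ i, ‖(inner ℂ (c i) (f (d j)) : ℂ)‖^2 :=
      fun j => (parseval_onb c (f (d j))).symm
    simp_rw [h1]
    rw [Finset.sum_comm]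
    congr 1
    ext i
    have h2 : ∀ j, (inner ℂ (c i) (f (d j)) : ℂ) = inner ℂ ((LinearMap.adjoint f) (c i)) (d j) :=
      fun j => (LinearMap.adjoint_inner_left f (d j) (c i)).symm
    simp_rw [h2]
    have h3 : ∀ j, ‖(inner ℂ ((LinearMap.adjoint f) (c i)) (d j) : ℂ)‖
        = ‖(inner ℂ (d j) ((LinearMap.adjoint f) (c i)) : ℂ)‖ := by
      intro j
      rw [← inner_conj_symm, Complex.norm_conj]
    simp_rw [h3]
    exact parseval_onb d _
  rw [key b, key c]

section Main
variable {n : ℕ}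

private lemma main_assembly (A : Matrix (Fin n) (Fin n) ℂ)
    (hρ : sSup ((fun z : ℂ => ‖z‖) '' spectrum ℂ A) < 1)
    (tri : ∃ b : OrthonormalBasis (Fin n) ℂ (EuclideanSpace ℂ (Fin n)),
      ∀ j, (Matrix.toEuclideanLin A) (b j) ∈ Submodule.span ℂ (b '' Set.Iic j))
    (specIff : ∀ μ : ℂ, μ ∈ spectrum ℂ A ↔ A.charpoly.IsRoot μ)
    (keyC : ∀ {r : ℝ} (z : ℂ), ‖z‖ ≤ r → r < 1 →
      Real.exp (z.re - ‖z‖^2/(2*(1-r))) ≤ ‖1+z‖) :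
    ‖(1 + A).det‖ ≥
      Real.exp ((Matrix.trace A).re -
        ((Real.sqrt (∑ i, ∑ j, ‖A i j‖ ^ 2)) ^ 2 / 2) /
          (1 - sSup ((fun z : ℂ => ‖z‖) '' spectrum ℂ A))) := by
  set ρ := sSup ((fun z : ℂ => ‖z‖) '' spectrum ℂ A) with hρdef
  set E := EuclideanSpace ℂ (Fin n) with hE
  set f : E →ₗ[ℂ] E := Matrix.toEuclideanLin A with hf
  set e : OrthonormalBasis (Fin n) ℂ E := EuclideanSpace.basisFun (Fin n) ℂ with he
  have hAe : LinearMap.toMatrix e.toBasis e.toBasis f = A := by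
    rw [hf, Matrix.toEuclideanLin_eq_toLin_orthonormal, LinearMap.toMatrix_toLin]
  obtain ⟨b, hb⟩ := tri
  set T : Matrix (Fin n) (Fin n) ℂ := LinearMap.toMatrix b.toBasis b.toBasis f with hT
  -- entries
  have hTij : ∀ i j, T i j = inner ℂ (b i) (f (b j)) := by
    intro i j
    rw [hT, LinearMap.toMatrix_apply, OrthonormalBasis.coe_toBasis,
      OrthonormalBasis.coe_toBasis_repr_apply, OrthonormalBasis.repr_apply_apply]
  have hAij : ∀ i j, A i j = inner ℂ (e i) (f (e j)) := by
    intro i j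
    rw [← hAe, LinearMap.toMatrix_apply, OrthonormalBasis.coe_toBasis,
      OrthonormalBasis.coe_toBasis_repr_apply, OrthonormalBasis.repr_apply_apply]
  -- triangularity
  have htri : T.BlockTriangular id := by
    intro i j hij
    rw [hTij]
    have hx := hb j
    have : ∀ x ∈ Submodule.span ℂ (b '' Set.Iic j), (inner ℂ (b i) x : ℂ) = 0 := by
      intro x hxmem
      induction hxmem using Submodule.span_induction with
      | mem x hxm =>
        obtain ⟨k, hk, rfl⟩ := hxm
        exact b.orthonormal.2 (fun h : i = k => absurd (h ▸ hk) (not_le.2 hij))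
      | zero => exact inner_zero_right _
      | add x y _ _ hx hy => rw [inner_add_right, hx, hy, add_zero]
      | smul a x _ hx => rw [inner_smul_right, hx, mul_zero]
    exact this _ hx
  -- charpoly equality
  have hchar : T.charpoly = A.charpoly := by
    rw [hT, ← hAe, LinearMap.charpoly_toMatrix, LinearMap.charpoly_toMatrix]
  -- determinant
  have hdet : (1 + T).det = (1 + A).det := by
    have h1 : (1 : Matrix (Fin n) (Fin n) ℂ) + T
        = LinearMap.toMatrix b.toBasis b.toBasis (LinearMap.id + f) := by
      rw [map_add, LinearMap.toMatrix_id, hT]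
    have h2 : (1 : Matrix (Fin n) (Fin n) ℂ) + A
        = LinearMap.toMatrix e.toBasis e.toBasis (LinearMap.id + f) := by
      rw [map_add, LinearMap.toMatrix_id, hAe]
    rw [h1, h2, LinearMap.det_toMatrix, LinearMap.det_toMatrix]
  -- trace
  have htrace : T.trace = A.trace := by
    rw [hT, ← hAe, ← LinearMap.trace_eq_matrix_trace, ← LinearMap.trace_eq_matrix_trace]
  -- frobenius
  have hfrob : ∑ i, ∑ j, ‖T i j‖^2 = ∑ i, ∑ j, ‖A i j‖^2 := by
    have hT2 : ∑ i, ∑ j, ‖T i j‖^2 = ∑ j, ‖f (b j)‖^2 := by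
      rw [Finset.sum_comm]
      congr 1; ext j
      simp_rw [hTij]
      exact parseval_onb b _
    have hA2 : ∑ i, ∑ j, ‖A i j‖^2 = ∑ j, ‖f (e j)‖^2 := by
      rw [Finset.sum_comm]
      congr 1; ext j
      simp_rw [hAij]
      exact parseval_onb e _
    rw [hT2, hA2]
    exact frob_sum_invariant b e f
  -- diagonal entries in the spectrum
  have hspec : ∀ i, T i i ∈ spectrum ℂ A := by
    intro i
    rw [specIff, ← hchar, Matrix.charpoly_of_upperTriangular T htri, Polynomial.IsRoot,
      Polynomial.eval_prod]
    apply Finset.prod_eq_zero (Finset.mem_univ i)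
    simp
  have hbdd : BddAbove ((fun z : ℂ => ‖z‖) '' spectrum ℂ A) := by
    apply Set.Finite.bddAbove
    apply Set.Finite.image
    have hsub : spectrum ℂ A ⊆ ↑A.charpoly.roots.toFinset := by
      intro μ hμ
      rw [Finset.mem_coe, Multiset.mem_toFinset, Polynomial.mem_roots (A.charpoly_monic.ne_zero)]
      exact (specIff μ).1 hμ
    exact Set.Finite.subset (Finset.finite_toSet _) hsub
  have habs : ∀ i, ‖T i i‖ ≤ ρ := fun i =>
    le_csSup hbdd ⟨T i i, hspec i, rfl⟩
  -- product formula
  have hdetT : (1 + T).det = ∏ i, (1 + T i i) := by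
    have h1 : (1 + T).BlockTriangular id := by
      intro i j hij
      have : (1 : Matrix (Fin n) (Fin n) ℂ) i j = 0 := Matrix.one_apply_ne (fun h => by
        subst h; exact lt_irrefl _ hij)
      simp [Matrix.add_apply, this, htri hij]
    rw [Matrix.det_of_upperTriangular h1]
    congr 1; ext i
    simp [Matrix.add_apply, Matrix.one_apply]
  -- final chain
  have h1r : (0:ℝ) < 1 - ρ := by linarith
  have sumdiag_le : ∑ i, ‖T i i‖^2 ≤ ∑ i, ∑ j, ‖A i j‖^2 := by
    rw [← hfrob]
    apply Finset.sum_le_sum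
    intro i _
    exact Finset.single_le_sum (f := fun j => ‖T i j‖^2)
      (fun j _ => sq_nonneg _) (Finset.mem_univ i)
  have prodbound : ∏ i, Real.exp ((T i i).re - (‖T i i‖)^2/(2*(1-ρ)))
      ≤ ∏ i, ‖1 + T i i‖ := by
    apply Finset.prod_le_prod
    · intro i _; exact (Real.exp_pos _).le
    · intro i _; exact keyC (T i i) (habs i) hρ
  set S : ℝ := ∑ i, ∑ j, ‖A i j‖^2 with hS
  have hS0 : 0 ≤ S := Finset.sum_nonneg fun i _ => Finset.sum_nonneg fun j _ => sq_nonneg _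
  have hsqrt : (Real.sqrt S)^2 = S := Real.sq_sqrt hS0
  have habsdet : ‖(1 + A).det‖ = ∏ i, ‖1 + T i i‖ := by
    rw [← hdet, hdetT, norm_prod]
  have hsumexp : ∏ i, Real.exp ((T i i).re - (‖T i i‖)^2/(2*(1-ρ)))
      = Real.exp (∑ i, ((T i i).re - (‖T i i‖)^2/(2*(1-ρ)))) :=
    (Real.exp_sum _ _).symm
  have htrre : ∑ i, (T i i).re = (Matrix.trace A).re := by
    rw [← htrace, Matrix.trace, Complex.re_sum]
    rfl
  have hsumsplit : ∑ i, ((T i i).re - (‖T i i‖)^2/(2*(1-ρ)))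
      = (Matrix.trace A).re - (∑ i, (‖T i i‖)^2)/(2*(1-ρ)) := by
    rw [Finset.sum_sub_distrib, htrre, Finset.sum_div]
  have hexp_mono : Real.exp ((Matrix.trace A).re - ((Real.sqrt S)^2/2)/(1-ρ))
      ≤ Real.exp ((Matrix.trace A).re - (∑ i, (‖T i i‖)^2)/(2*(1-ρ))) := by
    apply Real.exp_le_exp.2
    rw [hsqrt, div_div]
    have h2 : (∑ i, (‖T i i‖)^2)/(2*(1-ρ)) ≤ S/(2*(1-ρ)) :=
      div_le_div_of_nonneg_right sumdiag_le (by linarith)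
    linarith
  rw [ge_iff_le, habsdet]
  calc Real.exp ((Matrix.trace A).re - ((Real.sqrt S)^2/2)/(1-ρ))
      ≤ Real.exp ((Matrix.trace A).re - (∑ i, (‖T i i‖)^2)/(2*(1-ρ))) := hexp_mono
    _ = ∏ i, Real.exp ((T i i).re - (‖T i i‖)^2/(2*(1-ρ))) := by
        rw [hsumexp, hsumsplit]
    _ ≤ ∏ i, ‖1 + T i i‖ := prodbound

end Main


end

end SchurAux

/-- If ρ(A) < 1 then |det(I + A)| ≥ exp( Re(tr A) − (‖A‖₂²/2)/(1 − ρ(A)) ). -/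
theorem abs_det_one_add_ge_of_specRad_lt_one {n : ℕ} (A : Matrix (Fin n) (Fin n) ℂ)
    (hρ : specRad A < 1) :
    ‖(1 + A).det‖ ≥
      Real.exp ((Matrix.trace A).re - (frobC A ^ 2 / 2) / (1 - specRad A)) := by
  rw [specRad] at hρ
  have h := SchurAux.main_assembly A hρ
    (SchurAux.exists_triangular_onb n (EuclideanSpace ℂ (Fin n))
      finrank_euclideanSpace_fin (Matrix.toEuclideanLin A))
    (SchurAux.mem_spectrum_iff_isRoot A)
    (fun z h1 h2 => SchurAux.key_complex z h1 h2)
  rw [specRad, frobC]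
  exact h
end
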